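/- Fix a real α with 0 < α < 1 and a real τ > 0. Define for an integer d ≥ 1 and real t ≥ 0 the normalized gradient-descent loss r_d(t) = (1/H_{d,α}) · Σ_{k=1}^d k^{−α}(1 − k^{−α})^{2t}, where H_{d,α} = Σ_{k=1}^d k^{−α}. Then lim_{d→∞} r_d(τ·d^α/2) = ((1−α)/α) · τ^{(1/α)−1} · ∫_τ^∞ z^{−1/α} e^{−z} dz. -/

import Mathlib

open Filter MeasureTheory Set Real

section Aux

/-- Key exponential limit: `(1 - b d · d^{-α})^{τ d^α} → exp(-(τ L))` when `b d → L`. -/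
theorem stmt8_pow_lim {α τ L : ℝ} (hα0 : 0 < α) (hL : 0 < L) {b : ℕ → ℝ}
    (hb : Filter.Tendsto b atTop (nhds L)) (hbpos : ∀ᶠ d : ℕ in atTop, 0 < b d) :
    Filter.Tendsto (fun d : ℕ => (1 - b d * (d:ℝ)^(-α)) ^ (τ * (d:ℝ)^α)) atTop
      (nhds (Real.exp (-(τ * L)))) := by
  set u : ℕ → ℝ := fun d => b d * (d:ℝ)^(-α) with hu
  have hupos : ∀ᶠ d : ℕ in atTop, 0 < u d := by
    filter_upwards [hbpos, eventually_gt_atTop 0] with d hb' hd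
    exact mul_pos hb' (rpow_pos_of_pos (by exact_mod_cast hd) _)
  have hu0 : Filter.Tendsto u atTop (nhds 0) := by
    have : Filter.Tendsto (fun d : ℕ => (d:ℝ)^(-α)) atTop (nhds 0) :=
      tendsto_rpow_neg_atTop hα0 |>.comp tendsto_natCast_atTop_atTop
    simpa using hb.mul this
  have hlt : ∀ᶠ d : ℕ in atTop, u d < 1 := hu0.eventually_lt_const one_pos
  have hslope : Filter.Tendsto (fun v : ℝ => Real.log (1 - v) / v)
      (nhdsWithin 0 {x | x ≠ 0}) (nhds (-1)) := by
    have hd : HasDerivAt (fun v : ℝ => Real.log (1 - v)) (-1) 0 := by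
      simpa using ((hasDerivAt_id' (0:ℝ)).const_sub 1).log (by norm_num)
    have := hasDerivAt_iff_tendsto_slope.1 hd
    refine this.congr' ?_
    filter_upwards [self_mem_nhdsWithin] with v hv
    simp [slope_def_field, div_eq_div_iff]
  have huw : Filter.Tendsto u atTop (nhdsWithin 0 {x | x ≠ 0}) := by
    rw [tendsto_nhdsWithin_iff]
    exact ⟨hu0, by filter_upwards [hupos] with d hd; exact hd.ne'⟩
  have hexp : Filter.Tendsto (fun d : ℕ => τ * (d:ℝ)^α * Real.log (1 - u d)) atTop
      (nhds (-(τ * L))) := by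
    have h1 : Filter.Tendsto (fun d : ℕ => τ * b d * (Real.log (1 - u d) / u d)) atTop
        (nhds (τ * L * (-1))) :=
      ((tendsto_const_nhds (x := τ)).mul hb).mul (hslope.comp huw)
    rw [show τ * L * (-1) = -(τ * L) by ring] at h1
    refine h1.congr' ?_
    filter_upwards [eventually_gt_atTop 0, hupos] with d hd hud
    have hdpos : (0:ℝ) < d := by exact_mod_cast hd
    have hune : u d ≠ 0 := hud.ne'
    have key : b d = (d:ℝ)^α * u d := by
      have h2 : (d:ℝ)^α * (d:ℝ)^(-α) = 1 := by rw [← Real.rpow_add hdpos]; simp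
      calc b d = b d * ((d:ℝ)^α * (d:ℝ)^(-α)) := by rw [h2]; ring
      _ = (d:ℝ)^α * u d := by rw [hu]; ring
    rw [key]; field_simp
  have := (Real.continuous_exp.tendsto _).comp hexp
  refine this.congr' ?_
  filter_upwards [hlt] with d h1
  rw [Function.comp_apply,
    Real.rpow_def_of_pos (by linarith : (0:ℝ) < 1 - u d)]
  ring_nf

/-- Step function whose integral over `(0,1]` encodes the normalized sum. -/
noncomputable def stmt8F (α E : ℝ) (d : ℕ) (x : ℝ) : ℝ :=
  ∑ k ∈ Finset.Icc 1 d, Set.indicator (Set.Ioc (((k:ℝ)-1)/d) ((k:ℝ)/d))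
    (fun _ => ((k:ℝ)/d) ^ (-α) * (1 - (k:ℝ)^(-α)) ^ E) x

theorem stmt8F_meas (α E : ℝ) (d : ℕ) : Measurable (stmt8F α E d) := by
  apply Finset.measurable_sum
  intro k _
  exact (measurable_const.indicator measurableSet_Ioc)

theorem stmt8_mem_iff {d k : ℕ} (hk1 : 1 ≤ k) {x : ℝ} (hx : 0 < x) (hd : 0 < d) :
    x ∈ Set.Ioc (((k:ℝ)-1)/d) ((k:ℝ)/d) ↔ ⌈(d:ℝ)*x⌉₊ = k := by
  have hdpos : (0:ℝ) < d := by exact_mod_cast hd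
  rw [Nat.ceil_eq_iff (by omega : k ≠ 0)]
  have hcast : ((k-1 : ℕ) : ℝ) = (k:ℝ) - 1 := by
    have : (1:ℕ) ≤ k := hk1
    push_cast [Nat.cast_sub this]
    ring
  rw [hcast]
  constructor
  · rintro ⟨h1, h2⟩
    constructor
    · rw [div_lt_iff₀ hdpos] at h1; nlinarith
    · rw [le_div_iff₀ hdpos] at h2; nlinarith
  · rintro ⟨h1, h2⟩
    constructor
    · rw [div_lt_iff₀ hdpos]; nlinarith
    · rw [le_div_iff₀ hdpos]; nlinarith

theorem stmt8F_val (α E : ℝ) {d : ℕ} (hd : 0 < d) {x : ℝ} (hx : x ∈ Set.Ioc (0:ℝ) 1) :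
    stmt8F α E d x = ((⌈(d:ℝ)*x⌉₊:ℝ)/d) ^ (-α) * (1 - (⌈(d:ℝ)*x⌉₊:ℝ)^(-α)) ^ E := by
  obtain ⟨hx0, hx1⟩ := hx
  have hdpos : (0:ℝ) < d := by exact_mod_cast hd
  set k₀ := ⌈(d:ℝ)*x⌉₊ with hk₀
  have hk₀1 : 1 ≤ k₀ := Nat.one_le_ceil_iff.mpr (by positivity)
  have hk₀d : k₀ ≤ d := by
    rw [hk₀]
    exact Nat.ceil_le.mpr (by nlinarith)
  rw [stmt8F, Finset.sum_eq_single k₀]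
  · rw [Set.indicator_of_mem ((stmt8_mem_iff hk₀1 hx0 hd).mpr rfl)]
  · intro k hk hne
    rw [Set.indicator_of_notMem]
    intro hmem
    exact hne ((stmt8_mem_iff (Finset.mem_Icc.mp hk).1 hx0 hd).mp hmem).symm
  · intro h
    exact absurd (Finset.mem_Icc.mpr ⟨hk₀1, hk₀d⟩) h

theorem stmt8F_integral (α E : ℝ) {d : ℕ} (hd : 0 < d) :
    ∫ x in Set.Ioc (0:ℝ) 1, stmt8F α E d x
      = (d:ℝ)^(α-1) * ∑ k ∈ Finset.Icc 1 d, (k:ℝ)^(-α) * (1 - (k:ℝ)^(-α)) ^ E := by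
  have hdpos : (0:ℝ) < d := by exact_mod_cast hd
  have hsub : ∀ k ∈ Finset.Icc 1 d,
      Set.Ioc (((k:ℝ)-1)/d) ((k:ℝ)/d) ⊆ Set.Ioc (0:ℝ) 1 := by
    intro k hk
    obtain ⟨hk1, hkd⟩ := Finset.mem_Icc.mp hk
    have hk1' : (1:ℝ) ≤ k := by exact_mod_cast hk1
    apply Set.Ioc_subset_Ioc
    · apply div_nonneg (by linarith) hdpos.le
    · rw [div_le_one hdpos]; exact_mod_cast hkd
  simp only [stmt8F]
  rw [MeasureTheory.integral_finset_sum]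
  · have hterm : ∀ k ∈ Finset.Icc 1 d,
        (∫ x in Set.Ioc (0:ℝ) 1, Set.indicator (Set.Ioc (((k:ℝ)-1)/d) ((k:ℝ)/d))
          (fun _ => ((k:ℝ)/d) ^ (-α) * (1 - (k:ℝ)^(-α)) ^ E) x)
        = (d:ℝ)^(α-1) * ((k:ℝ)^(-α) * (1 - (k:ℝ)^(-α)) ^ E) := by
      intro k hk
      obtain ⟨hk1, hkd⟩ := Finset.mem_Icc.mp hk
      have hkpos : (0:ℝ) < k := by exact_mod_cast hk1
      rw [MeasureTheory.integral_indicator measurableSet_Ioc,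
        MeasureTheory.Measure.restrict_restrict measurableSet_Ioc,
        Set.inter_eq_left.mpr (hsub k hk), MeasureTheory.setIntegral_const,
        Real.volume_real_Ioc]
      have hlen : ((k:ℝ)/d - ((k:ℝ)-1)/d) = 1/d := by field_simp; ring
      rw [hlen, max_eq_left (by positivity)]
      have hdiv : ((k:ℝ)/d) ^ (-α) = (k:ℝ)^(-α) * (d:ℝ)^α := by
        rw [Real.div_rpow hkpos.le hdpos.le, Real.rpow_neg hdpos.le]
        field_simp
      rw [smul_eq_mul, hdiv, Real.rpow_sub hdpos, Real.rpow_one]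
      ring
    rw [Finset.sum_congr rfl hterm, ← Finset.mul_sum]
  · intro k hk
    haveI : IsFiniteMeasure (volume.restrict (Set.Ioc (0:ℝ) 1)) :=
      ⟨by simp [Real.volume_Ioc]⟩
    exact (MeasureTheory.integrable_const _).indicator measurableSet_Ioc

theorem stmt8F_zero (α E : ℝ) (x : ℝ) : stmt8F α E 0 x = 0 := by
  simp [stmt8F]

/-- Convergence of the ceiling Riemann points. -/
theorem stmt8_ceil_tendsto {x : ℝ} (hx : 0 < x) :
    Filter.Tendsto (fun d : ℕ => (⌈(d:ℝ)*x⌉₊ : ℝ)/d) atTop (nhds x) := by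
  have h1 : Filter.Tendsto (fun d : ℕ => x + 1/(d:ℝ)) atTop (nhds x) := by
    simpa using (tendsto_const_nhds (x := x)).add (tendsto_one_div_atTop_nhds_zero_nat (𝕜 := ℝ))
  refine tendsto_of_tendsto_of_tendsto_of_le_of_le' tendsto_const_nhds h1 ?_ ?_
  · filter_upwards [eventually_gt_atTop 0] with d hd
    rw [le_div_iff₀ (by positivity)]
    calc x * d = (d:ℝ) * x := by ring
    _ ≤ ⌈(d:ℝ)*x⌉₊ := Nat.le_ceil _
  · filter_upwards [eventually_gt_atTop 0] with d hd
    rw [div_le_iff₀ (by positivity)]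
    have := (Nat.ceil_lt_add_one (by positivity : (0:ℝ) ≤ (d:ℝ)*x)).le
    calc (⌈(d:ℝ)*x⌉₊:ℝ) ≤ (d:ℝ)*x + 1 := this
    _ = (x + 1/d) * d := by field_simp

theorem stmt8_x_le_ceil {x : ℝ} (hx : 0 < x) {d : ℕ} (hd : 0 < d) :
    x ≤ (⌈(d:ℝ)*x⌉₊ : ℝ)/d := by
  have hdpos : (0:ℝ) < d := by exact_mod_cast hd
  rw [le_div_iff₀ hdpos]
  calc x * d = (d:ℝ) * x := by ring
  _ ≤ ⌈(d:ℝ)*x⌉₊ := Nat.le_ceil _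

end Aux

section AuxMore
variable {α τ : ℝ}

theorem stmt8_bound_int (hα0 : 0 < α) (hα1 : α < 1) :
    IntegrableOn (fun x : ℝ => x ^ (-α)) (Set.Ioc (0:ℝ) 1) := by
  have h : IntervalIntegrable (fun x : ℝ => x ^ (-α)) volume 0 1 :=
    intervalIntegral.intervalIntegrable_rpow' (by linarith)
  exact (intervalIntegrable_iff_integrableOn_Ioc_of_le (by norm_num)).mp h

theorem stmt8_bound (hα0 : 0 < α) {E : ℝ} (hE : 0 ≤ E) (d : ℕ) {x : ℝ}
    (hx : x ∈ Set.Ioc (0:ℝ) 1) : ‖stmt8F α E d x‖ ≤ x ^ (-α) := by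
  rcases Nat.eq_zero_or_pos d with hd | hd
  · subst hd; rw [stmt8F_zero]; simp; exact Real.rpow_nonneg hx.1.le _
  · rw [stmt8F_val α E hd hx]
    set c : ℝ := (⌈(d:ℝ)*x⌉₊:ℝ)/d with hc
    have hxc : x ≤ c := stmt8_x_le_ceil hx.1 hd
    have hc0 : 0 < c := lt_of_lt_of_le hx.1 hxc
    have h1 : c ^ (-α) ≤ x ^ (-α) :=
      Real.rpow_le_rpow_of_nonpos hx.1 hxc (by linarith)
    have hceil1 : (1:ℝ) ≤ (⌈(d:ℝ)*x⌉₊:ℝ) := by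
      have : 1 ≤ ⌈(d:ℝ)*x⌉₊ := Nat.one_le_ceil_iff.mpr
        (mul_pos (by exact_mod_cast hd : (0:ℝ) < d) hx.1)
      exact_mod_cast this
    have hb0 : (0:ℝ) ≤ 1 - (⌈(d:ℝ)*x⌉₊:ℝ)^(-α) := by
      have := Real.rpow_le_one_of_one_le_of_nonpos hceil1 (by linarith : -α ≤ 0)
      linarith
    have hb1 : (1:ℝ) - (⌈(d:ℝ)*x⌉₊:ℝ)^(-α) ≤ 1 := by
      have : (0:ℝ) ≤ (⌈(d:ℝ)*x⌉₊:ℝ)^(-α) := Real.rpow_nonneg (by linarith) _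
      linarith
    have h2 : ((1:ℝ) - (⌈(d:ℝ)*x⌉₊:ℝ)^(-α)) ^ E ≤ 1 := Real.rpow_le_one hb0 hb1 hE
    have h2' : (0:ℝ) ≤ ((1:ℝ) - (⌈(d:ℝ)*x⌉₊:ℝ)^(-α)) ^ E := Real.rpow_nonneg hb0 _
    rw [norm_eq_abs, abs_of_nonneg (mul_nonneg (Real.rpow_nonneg hc0.le _) h2')]
    calc c ^ (-α) * ((1:ℝ) - (⌈(d:ℝ)*x⌉₊:ℝ)^(-α)) ^ E ≤ c ^ (-α) * 1 := by
          exact mul_le_mul_of_nonneg_left h2 (Real.rpow_nonneg hc0.le _)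
    _ = c ^ (-α) := mul_one _
    _ ≤ x ^ (-α) := h1

theorem stmt8_num_tendsto (hα0 : 0 < α) (hα1 : α < 1) (hτ : 0 < τ) :
    Filter.Tendsto (fun d : ℕ => ∫ x in Set.Ioc (0:ℝ) 1, stmt8F α (τ*(d:ℝ)^α) d x) atTop
      (nhds (∫ x in Set.Ioc (0:ℝ) 1, x^(-α) * Real.exp (-(τ * x^(-α))))) := by
  apply MeasureTheory.tendsto_integral_of_dominated_convergence (fun x => x ^ (-α))
  · exact fun d => ((stmt8F_meas α _ d).aestronglyMeasurable)
  · exact stmt8_bound_int hα0 hα1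
  · intro d
    rw [ae_restrict_iff' measurableSet_Ioc]
    exact ae_of_all _ fun x hx => stmt8_bound hα0 (by positivity) d hx
  · rw [ae_restrict_iff' measurableSet_Ioc]
    refine ae_of_all _ fun x hx => ?_
    obtain ⟨hx0, hx1⟩ := hx
    set b : ℕ → ℝ := fun d => ((⌈(d:ℝ)*x⌉₊:ℝ)/d) ^ (-α) with hbdef
    have hbtend : Filter.Tendsto b atTop (nhds (x ^ (-α))) :=
      (stmt8_ceil_tendsto hx0).rpow_const (Or.inl hx0.ne')
    have hbpos : ∀ᶠ d : ℕ in atTop, 0 < b d := by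
      filter_upwards [eventually_gt_atTop 0] with d hd
      exact Real.rpow_pos_of_pos (lt_of_lt_of_le hx0 (stmt8_x_le_ceil hx0 hd)) _
    have hmain := (hbtend.mul (stmt8_pow_lim (τ := τ) hα0 (Real.rpow_pos_of_pos hx0 _) hbtend hbpos))
    refine hmain.congr' ?_
    filter_upwards [eventually_gt_atTop 0] with d hd
    have hdpos : (0:ℝ) < d := by exact_mod_cast hd
    rw [stmt8F_val α _ hd ⟨hx0, hx1⟩]
    congr 2
    rw [hbdef]
    have : (⌈(d:ℝ)*x⌉₊:ℝ) = ((⌈(d:ℝ)*x⌉₊:ℝ)/d) * d := by field_simp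
    rw [this, Real.mul_rpow (by positivity) hdpos.le]

theorem stmt8_den_tendsto (hα0 : 0 < α) (hα1 : α < 1) :
    Filter.Tendsto (fun d : ℕ => ∫ x in Set.Ioc (0:ℝ) 1, stmt8F α 0 d x) atTop
      (nhds (1/(1-α))) := by
  have hval : ∫ x in Set.Ioc (0:ℝ) 1, x ^ (-α) = 1/(1-α) := by
    have h := integral_rpow (a := 0) (b := 1) (Or.inl (by linarith : (-1:ℝ) < -α))
    rw [intervalIntegral.integral_of_le (by norm_num : (0:ℝ) ≤ 1)] at h
    rw [h, Real.one_rpow, Real.zero_rpow (by linarith : -α + 1 ≠ 0)]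
    rw [show -α + 1 = 1 - α by ring]; norm_num
  rw [← hval]
  apply MeasureTheory.tendsto_integral_of_dominated_convergence (fun x => x ^ (-α))
  · exact fun d => ((stmt8F_meas α 0 d).aestronglyMeasurable)
  · exact stmt8_bound_int hα0 hα1
  · intro d
    rw [ae_restrict_iff' measurableSet_Ioc]
    exact ae_of_all _ fun x hx => stmt8_bound hα0 le_rfl d hx
  · rw [ae_restrict_iff' measurableSet_Ioc]
    refine ae_of_all _ fun x hx => ?_
    obtain ⟨hx0, hx1⟩ := hx
    have hbtend : Filter.Tendsto (fun d : ℕ => ((⌈(d:ℝ)*x⌉₊:ℝ)/d) ^ (-α)) atTop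
        (nhds (x ^ (-α))) := (stmt8_ceil_tendsto hx0).rpow_const (Or.inl hx0.ne')
    refine hbtend.congr' ?_
    filter_upwards [eventually_gt_atTop 0] with d hd
    rw [stmt8F_val α 0 hd ⟨hx0, hx1⟩, Real.rpow_zero, mul_one]

end AuxMore


theorem stmt8_subst {α τ : ℝ} (hα0 : 0 < α) (hα1 : α < 1) (hτ : 0 < τ) :
    ∫ z in Set.Ioi τ, z ^ (-(1/α)) * Real.exp (-z)
      = (α * τ ^ (1 - 1/α)) * ∫ x in Set.Ioc (0:ℝ) 1, x^(-α) * Real.exp (-(τ * x^(-α))) := by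
  have hαne : α ≠ 0 := hα0.ne'
  set f : ℝ → ℝ := fun x => τ * x ^ (-α) with hf
  set f' : ℝ → ℝ := fun x => τ * (-α * x ^ (-α - 1)) with hf'
  have himg : f '' Set.Ioo (0:ℝ) 1 = Set.Ioi τ := by
    apply Set.eq_of_subset_of_subset
    · rintro z ⟨x, ⟨hx0, hx1⟩, rfl⟩
      have : 1 < x ^ (-α) := by
        rw [Real.one_lt_rpow_iff_of_pos hx0]
        exact Or.inr ⟨hx1, by linarith⟩
      simp only [hf, Set.mem_Ioi]
      nlinarith
    · rintro z hz
      rw [Set.mem_Ioi] at hz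
      have hz0 : 0 < z := lt_trans hτ hz
      have hbase : 0 < τ / z := div_pos hτ hz0
      have hbase1 : τ / z < 1 := (div_lt_one hz0).mpr hz
      refine ⟨(τ/z) ^ (1/α), ⟨Real.rpow_pos_of_pos hbase _,
        Real.rpow_lt_one hbase.le hbase1 (by positivity)⟩, ?_⟩
      simp only [hf]
      rw [← Real.rpow_mul hbase.le]
      rw [show (1/α) * (-α) = -1 by field_simp]
      rw [Real.rpow_neg_one]
      field_simp
  have hderiv : ∀ x ∈ Set.Ioo (0:ℝ) 1, HasDerivWithinAt f (f' x) (Set.Ioo (0:ℝ) 1) x := by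
    intro x hx
    exact ((Real.hasDerivAt_rpow_const (Or.inl hx.1.ne')).const_mul τ).hasDerivWithinAt
  have hinj : Set.InjOn f (Set.Ioo (0:ℝ) 1) := by
    have : StrictAntiOn f (Set.Ioo (0:ℝ) 1) := by
      intro x hx y hy hxy
      exact mul_lt_mul_of_pos_left
        (Real.rpow_lt_rpow_of_neg hx.1 hxy (by linarith)) hτ
    exact this.injOn
  rw [← himg, integral_image_eq_integral_abs_deriv_smul measurableSet_Ioo hderiv hinj]
  rw [MeasureTheory.integral_Ioc_eq_integral_Ioo]
  rw [← MeasureTheory.integral_const_mul]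
  apply MeasureTheory.setIntegral_congr_fun measurableSet_Ioo
  intro x hx
  obtain ⟨hx0, hx1⟩ := hx
  have hxa : (0:ℝ) < x ^ (-α) := Real.rpow_pos_of_pos hx0 _
  simp only [hf, hf', smul_eq_mul]
  have hp : (0:ℝ) < x ^ (-α - 1) := Real.rpow_pos_of_pos hx0 _
  rw [abs_of_nonpos (by nlinarith [mul_pos hτ (mul_pos hα0 hp)] : τ * (-α * x ^ (-α - 1)) ≤ 0)]
  rw [Real.mul_rpow hτ.le hxa.le, ← Real.rpow_mul hx0.le]
  rw [show (-α) * (-(1/α)) = 1 by field_simp]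
  rw [Real.rpow_one]
  rw [show (1:ℝ) - 1/α = 1 + -(1/α) by ring, Real.rpow_add hτ, Real.rpow_one]
  have hxx : x ^ (-α - 1) * x = x ^ (-α) := by
    rw [show -α - 1 = -α + (-1) by ring, Real.rpow_add hx0, Real.rpow_neg_one]
    field_simp
  rw [← hxx]
  ring


/-- α < 1 case of the gradient-descent scaling law: the normalized loss
`r_d(t) = (1/H_{d,α}) Σ_{k=1}^d k^{−α}(1−k^{−α})^{2t}` at `t = τ·d^α/2`
converges to `((1−α)/α)·E_{1/α}(τ)`. -/
theorem stmt8 (α τ : ℝ) (hα0 : 0 < α) (hα1 : α < 1) (hτ : 0 < τ) :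
    Tendsto
      (fun d : ℕ =>
        (∑ k ∈ Finset.Icc 1 d,
          (k : ℝ) ^ (-α) * (1 - (k : ℝ) ^ (-α)) ^ (2 * (τ * (d : ℝ) ^ α / 2))) /
        (∑ k ∈ Finset.Icc 1 d, (k : ℝ) ^ (-α)))
      atTop
      (nhds (((1 - α) / α) * τ ^ (1 / α - 1) *
        ∫ z in Set.Ioi τ, z ^ (-(1 / α)) * Real.exp (-z))) := by
  have hI := stmt8_num_tendsto hα0 hα1 hτ
  have hD := stmt8_den_tendsto hα0 hα1
  have hne : (1:ℝ)/(1-α) ≠ 0 := one_div_ne_zero (by linarith)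
  have h3 := hI.div hD hne
  set I := ∫ x in Set.Ioc (0:ℝ) 1, x^(-α) * Real.exp (-(τ * x^(-α))) with hIdef
  have hval : ((1 - α) / α) * τ ^ (1 / α - 1) *
      (∫ z in Set.Ioi τ, z ^ (-(1 / α)) * Real.exp (-z)) = I / (1/(1-α)) := by
    rw [stmt8_subst hα0 hα1 hτ, ← hIdef, div_div_eq_mul_div, div_one]
    have hτ1 : τ^(1/α-1) * τ^(1-1/α) = 1 := by
      rw [← Real.rpow_add hτ]
      norm_num
    have hre : (1-α)/α * τ^(1/α-1) * (α * τ^(1-1/α) * I)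
        = (τ^(1/α-1) * τ^(1-1/α)) * ((1-α) * I) * (α / α) := by ring
    rw [hre, hτ1, div_self hα0.ne']
    ring
  rw [hval]
  refine h3.congr' ?_
  filter_upwards [eventually_gt_atTop 0] with d hd
  have hdpos : (0:ℝ) < d := by exact_mod_cast hd
  have hc : (d:ℝ)^(α-1) ≠ 0 := (Real.rpow_pos_of_pos hdpos _).ne'
  simp only [Pi.div_apply]
  rw [stmt8F_integral α (τ*(d:ℝ)^α) hd, stmt8F_integral α 0 hd, mul_div_mul_left _ _ hc]
  congr 1
  · apply Finset.sum_congr rfl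
    intro k hk
    rw [show 2 * (τ * (d:ℝ)^α / 2) = τ * (d:ℝ)^α by ring]
  · apply Finset.sum_congr rfl
    intro k hk
    rw [Real.rpow_zero, mul_one]
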